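/- Constrained entropy representation of the free energy: F(τ) = max over probability distributions q on {0,1}^p with E_q[X] = τ of [H(q) + E_q log h(X)], for every τ ∈ (0,1)^p. -/

import Mathlib

open Finset

/-- Value of a Boolean coordinate as a real number. -/
noncomputable def bval (b : Bool) : ℝ := if b then 1 else 0

/-- Scalar product `⟨θ, x⟩` for `x ∈ {0,1}^p`. -/
noncomputable def ip {p : ℕ} (θ : Fin p → ℝ) (x : Fin p → Bool) : ℝ :=
  ∑ i, θ i * bval (x i)

/-- Partition function `Z(θ)`. -/
noncomputable def Zfun {p : ℕ} (h : (Fin p → Bool) → ℝ) (θ : Fin p → ℝ) : ℝ :=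
  ∑ x : Fin p → Bool, h x * Real.exp (ip θ x)

/-- Log-partition function `A(θ)`. -/
noncomputable def Afun {p : ℕ} (h : (Fin p → Bool) → ℝ) (θ : Fin p → ℝ) : ℝ :=
  Real.log (Zfun h θ)

/-- Density `p_θ(x)` of the exponential family. -/
noncomputable def pdens {p : ℕ} (h : (Fin p → Bool) → ℝ) (θ : Fin p → ℝ)
    (x : Fin p → Bool) : ℝ :=
  h x * Real.exp (ip θ x) / Zfun h θ

/-- Mean `τ_*(θ)_i = E_θ[X_i]`. -/
noncomputable def meanMap {p : ℕ} (h : (Fin p → Bool) → ℝ) (θ : Fin p → ℝ) (i : Fin p) : ℝ :=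
  ∑ x : Fin p → Bool, bval (x i) * pdens h θ x

-- Z positive
lemma Zpos {p : ℕ} {h : (Fin p → Bool) → ℝ} (hpos : ∀ x, 0 < h x) (θ : Fin p → ℝ) :
    0 < Zfun h θ :=
  Finset.sum_pos (fun x _ => mul_pos (hpos x) (Real.exp_pos _)) univ_nonempty

lemma pdens_sum {p : ℕ} {h : (Fin p → Bool) → ℝ} (hpos : ∀ x, 0 < h x) (θ : Fin p → ℝ) :
    ∑ x : Fin p → Bool, pdens h θ x = 1 := by
  simp only [pdens, ← Finset.sum_div]
  exact div_self (Zpos hpos θ).ne'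

lemma log_pdens {p : ℕ} {h : (Fin p → Bool) → ℝ} (hpos : ∀ x, 0 < h x) (θ : Fin p → ℝ)
    (x : Fin p → Bool) :
    Real.log (pdens h θ x) = Real.log (h x) + ip θ x - Afun h θ := by
  rw [pdens, Afun, Real.log_div (mul_pos (hpos x) (Real.exp_pos _)).ne' (Zpos hpos θ).ne',
    Real.log_mul (hpos x).ne' (Real.exp_pos _).ne', Real.log_exp]

lemma sum_mul_ip {p : ℕ} (q : (Fin p → Bool) → ℝ) (θ : Fin p → ℝ) :
    ∑ x : Fin p → Bool, q x * ip θ x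
      = ∑ i, θ i * ∑ x : Fin p → Bool, q x * bval (x i) := by
  have hx : ∀ x : Fin p → Bool, q x * ip θ x = ∑ i, θ i * (q x * bval (x i)) := by
    intro x; rw [ip, Finset.mul_sum]; exact Finset.sum_congr rfl fun i _ => by ring
  simp_rw [hx, Finset.mul_sum]
  exact Finset.sum_comm

lemma gibbs {X : Type*} [Fintype X] [Nonempty X] (q pd : X → ℝ) (hq : ∀ x, 0 ≤ q x)
    (hpd : ∀ x, 0 < pd x) (hqs : ∑ x, q x = 1) (hps : ∑ x, pd x = 1) :
    ∑ x, q x * Real.log (pd x) ≤ ∑ x, q x * Real.log (q x) := by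
  have key : ∀ x, q x * Real.log (pd x) - q x * Real.log (q x) ≤ pd x - q x := by
    intro x
    rcases eq_or_lt_of_le (hq x) with h0 | h0
    · simp [← h0]; exact (hpd x).le
    · have hlog : Real.log (pd x) - Real.log (q x) = Real.log (pd x / q x) :=
        (Real.log_div (hpd x).ne' h0.ne').symm
      have hle : Real.log (pd x / q x) ≤ pd x / q x - 1 :=
        Real.log_le_sub_one_of_pos (div_pos (hpd x) h0)
      have : q x * Real.log (pd x) - q x * Real.log (q x) = q x * Real.log (pd x / q x) := by
        rw [← mul_sub, hlog]
      rw [this]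
      calc q x * Real.log (pd x / q x) ≤ q x * (pd x / q x - 1) := by
            exact mul_le_mul_of_nonneg_left hle (hq x)
        _ = pd x - q x := by field_simp
  have hs := Finset.sum_le_sum (fun x (_ : x ∈ univ) => key x)
  rw [Finset.sum_sub_distrib, Finset.sum_sub_distrib, hqs, hps] at hs
  linarith

lemma upper_bound {p : ℕ} {h : (Fin p → Bool) → ℝ} (hpos : ∀ x, 0 < h x)
    (θ τ : Fin p → ℝ) (q : (Fin p → Bool) → ℝ) (hq0 : ∀ x, 0 ≤ q x)
    (hq1 : ∑ x : Fin p → Bool, q x = 1)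
    (hqτ : ∀ i, ∑ x : Fin p → Bool, q x * bval (x i) = τ i) :
    (-∑ x : Fin p → Bool, q x * Real.log (q x)) + ∑ x : Fin p → Bool, q x * Real.log (h x)
      ≤ Afun h θ - ∑ i, τ i * θ i := by
  have hg := gibbs q (pdens h θ) hq0
    (fun x => div_pos (mul_pos (hpos x) (Real.exp_pos _)) (Zpos hpos θ)) hq1 (pdens_sum hpos θ)
  have hexp : ∑ x : Fin p → Bool, q x * Real.log (pdens h θ x)
      = (∑ x : Fin p → Bool, q x * Real.log (h x)) + (∑ i, τ i * θ i) - Afun h θ := by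
    simp_rw [log_pdens hpos]
    have hsplit : ∀ x : Fin p → Bool, q x * (Real.log (h x) + ip θ x - Afun h θ)
        = q x * Real.log (h x) + q x * ip θ x - q x * Afun h θ := fun x => by ring
    simp_rw [hsplit]
    rw [Finset.sum_sub_distrib, Finset.sum_add_distrib, ← Finset.sum_mul, hq1, one_mul,
      sum_mul_ip]
    simp_rw [hqτ]
    rw [show (∑ i, θ i * τ i) = ∑ i, τ i * θ i from
      Finset.sum_congr rfl fun i _ => mul_comm _ _]
  rw [hexp] at hg
  linarith

lemma coercive_bound {p : ℕ} (hp : 1 ≤ p) {h : (Fin p → Bool) → ℝ} (hpos : ∀ x, 0 < h x)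
    {τ : Fin p → ℝ} (hτ : ∀ i, τ i ∈ Set.Ioo (0:ℝ) 1) :
    ∃ c ε : ℝ, 0 < ε ∧ ∀ θ : Fin p → ℝ, c + ε * ‖θ‖ ≤ Afun h θ - ∑ i, τ i * θ i := by
  haveI : Nonempty (Fin p) := Fin.pos_iff_nonempty.1 hp
  set ε : ℝ := univ.inf' univ_nonempty (fun i => min (τ i) (1 - τ i)) with hε
  set c : ℝ := univ.inf' univ_nonempty (fun x : Fin p → Bool => Real.log (h x)) with hc
  have hεpos : 0 < ε := by
    rw [hε, Finset.lt_inf'_iff]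
    exact fun i _ => lt_min (hτ i).1 (by linarith [(hτ i).2])
  refine ⟨c, ε, hεpos, ?_⟩
  intro θ
  set xθ : Fin p → Bool := fun i => decide (0 ≤ θ i) with hxθ
  have hA : c + ∑ i, max (θ i) 0 ≤ Afun h θ := by
    have hZ : h xθ * Real.exp (ip θ xθ) ≤ Zfun h θ :=
      Finset.single_le_sum (fun x _ => (mul_pos (hpos x) (Real.exp_pos _)).le) (mem_univ xθ)
    have hlog : Real.log (h xθ * Real.exp (ip θ xθ)) ≤ Afun h θ :=
      Real.log_le_log (mul_pos (hpos xθ) (Real.exp_pos _)) hZ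
    rw [Real.log_mul (hpos xθ).ne' (Real.exp_pos _).ne', Real.log_exp] at hlog
    have hip : ip θ xθ = ∑ i, max (θ i) 0 := by
      refine Finset.sum_congr rfl fun i _ => ?_
      by_cases hi : 0 ≤ θ i
      · simp [bval, hxθ, hi, max_eq_left hi]
      · simp [bval, hxθ, hi, max_eq_right (le_of_not_ge hi)]
    have hcl : c ≤ Real.log (h xθ) := Finset.inf'_le _ (mem_univ xθ)
    rw [hip] at hlog
    linarith
  have hterm : ∀ i, ε * |θ i| ≤ max (θ i) 0 - τ i * θ i := by
    intro i
    have h1 : ε ≤ min (τ i) (1 - τ i) := Finset.inf'_le _ (mem_univ i)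
    rcases le_or_gt 0 (θ i) with hi | hi
    · rw [abs_of_nonneg hi, max_eq_left hi]
      nlinarith [min_le_right (τ i) (1 - τ i)]
    · rw [abs_of_neg hi, max_eq_right hi.le]
      nlinarith [min_le_left (τ i) (1 - τ i)]
  have hnle : ‖θ‖ ≤ ∑ i, |θ i| := by
    rw [pi_norm_le_iff_of_nonneg (Finset.sum_nonneg fun i _ => abs_nonneg _)]
    intro i
    rw [Real.norm_eq_abs]
    exact Finset.single_le_sum (fun j _ => abs_nonneg (θ j)) (mem_univ i)
  have hnorm : ε * ‖θ‖ ≤ ∑ i, ε * |θ i| := by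
    rw [← Finset.mul_sum]
    exact mul_le_mul_of_nonneg_left hnle hεpos.le
  have hsum : ∑ i, ε * |θ i| ≤ (∑ i, max (θ i) 0) - ∑ i, τ i * θ i := by
    rw [← Finset.sum_sub_distrib]
    exact Finset.sum_le_sum fun i _ => hterm i
  linarith

lemma exists_min {p : ℕ} (hp : 1 ≤ p) {h : (Fin p → Bool) → ℝ} (hpos : ∀ x, 0 < h x)
    {τ : Fin p → ℝ} (hτ : ∀ i, τ i ∈ Set.Ioo (0:ℝ) 1) :
    ∃ θ0 : Fin p → ℝ, ∀ θ, Afun h θ0 - ∑ i, τ i * θ0 i ≤ Afun h θ - ∑ i, τ i * θ i := by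
  obtain ⟨c, ε, hεpos, hcoer⟩ := coercive_bound hp hpos hτ
  have hcont : Continuous fun θ : Fin p → ℝ => Afun h θ - ∑ i, τ i * θ i := by
    have hZ : Continuous fun θ : Fin p → ℝ => Zfun h θ := by
      refine continuous_finset_sum _ fun x _ => continuous_const.mul ?_
      exact Real.continuous_exp.comp (continuous_finset_sum _ fun i _ =>
        (continuous_apply i).mul continuous_const)
    exact (hZ.log fun θ => (Zpos hpos θ).ne').sub
      (continuous_finset_sum _ fun i _ => continuous_const.mul (continuous_apply i))
  have hlim : Filter.Tendsto (fun θ : Fin p → ℝ => Afun h θ - ∑ i, τ i * θ i)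
      (Filter.cocompact _) Filter.atTop := by
    refine Filter.tendsto_atTop_mono (fun θ => hcoer θ) ?_
    exact Filter.tendsto_atTop_add_const_left _ c
      (tendsto_norm_cocompact_atTop.const_mul_atTop hεpos)
  exact hcont.exists_forall_le hlim

lemma stationary {p : ℕ} {h : (Fin p → Bool) → ℝ} (hpos : ∀ x, 0 < h x)
    {τ : Fin p → ℝ} {θ0 : Fin p → ℝ}
    (hmin : ∀ θ, Afun h θ0 - ∑ i, τ i * θ0 i ≤ Afun h θ - ∑ i, τ i * θ i) (i : Fin p) :
    ∑ x : Fin p → Bool, pdens h θ0 x * bval (x i) = τ i := by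
  have hZ : 0 < Zfun h θ0 := Zpos hpos θ0
  set e : Fin p → ℝ := Pi.single i 1 with he
  set φ : ℝ → ℝ := fun t =>
    Real.log (∑ x : Fin p → Bool, h x * Real.exp (ip θ0 x + t * bval (x i)))
      - (∑ j, τ j * θ0 j) - t * τ i with hφdef
  have hip : ∀ (t : ℝ) (x : Fin p → Bool),
      ip (θ0 + t • e) x = ip θ0 x + t * bval (x i) := by
    intro t x
    simp only [ip, he, Pi.add_apply, Pi.smul_apply, Pi.single_apply, smul_eq_mul]
    have key : ∀ j, (θ0 j + t * (if j = i then (1:ℝ) else 0)) * bval (x j)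
        = θ0 j * bval (x j) + (if j = i then t * bval (x j) else 0) := by
      intro j; by_cases hj : j = i <;> simp [hj] <;> ring
    simp_rw [key]
    rw [Finset.sum_add_distrib, Finset.sum_ite_eq' univ i fun j => t * bval (x j),
      if_pos (mem_univ i)]
  have hlin : ∀ t : ℝ, (∑ j, τ j * (θ0 + t • e) j)
      = (∑ j, τ j * θ0 j) + t * τ i := by
    intro t
    simp only [he, Pi.add_apply, Pi.smul_apply, Pi.single_apply, smul_eq_mul]
    have key : ∀ j, τ j * (θ0 j + t * (if j = i then (1:ℝ) else 0))
        = τ j * θ0 j + (if j = i then t * τ j else 0) := by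
      intro j; by_cases hj : j = i <;> simp [hj] <;> ring
    simp_rw [key]
    rw [Finset.sum_add_distrib, Finset.sum_ite_eq' univ i fun j => t * τ j,
      if_pos (mem_univ i), mul_comm t (τ i)]
  have hGφ : ∀ t : ℝ, φ t = Afun h (θ0 + t • e)
      - ∑ j, τ j * (θ0 + t • e) j := by
    intro t
    rw [hlin t, hφdef]
    simp only [Afun, Zfun]
    simp_rw [hip t]
    ring
  have hφ0 : φ 0 = Afun h θ0 - ∑ j, τ j * θ0 j := by
    rw [hGφ 0]; simp
  have hlocmin : IsLocalMin φ 0 := by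
    refine Filter.Eventually.of_forall fun t => ?_
    rw [hφ0, hGφ t]
    exact hmin _
  -- derivative of φ at 0
  have hS : HasDerivAt (fun t : ℝ => ∑ x : Fin p → Bool, h x * Real.exp (ip θ0 x + t * bval (x i)))
      (∑ x : Fin p → Bool, h x * Real.exp (ip θ0 x) * bval (x i)) 0 := by
    refine HasDerivAt.fun_sum fun x _ => ?_
    have h1 : HasDerivAt (fun t : ℝ => ip θ0 x + t * bval (x i)) (bval (x i)) 0 := by
      simpa using ((hasDerivAt_id (0:ℝ)).mul_const (bval (x i))).const_add (ip θ0 x)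
    have := h1.exp.const_mul (h x)
    simpa [mul_assoc] using this
  have hS0 : (∑ x : Fin p → Bool, h x * Real.exp (ip θ0 x + 0 * bval (x i))) = Zfun h θ0 := by
    simp [Zfun]
  have hφd : HasDerivAt φ
      ((∑ x : Fin p → Bool, h x * Real.exp (ip θ0 x) * bval (x i)) / Zfun h θ0 - τ i) 0 := by
    have hlog := hS.log (by rw [hS0]; exact hZ.ne')
    rw [hS0] at hlog
    have hid : HasDerivAt (fun t : ℝ => t * τ i) (τ i) 0 := by
      simpa using (hasDerivAt_id (0:ℝ)).mul_const (τ i)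
    exact (hlog.sub_const _).sub hid
  have hzero := hlocmin.hasDerivAt_eq_zero hφd
  have hsum : (∑ x : Fin p → Bool, h x * Real.exp (ip θ0 x) * bval (x i)) / Zfun h θ0 = τ i := by
    linarith [hzero]
  rw [← hsum, Finset.sum_div]
  refine Finset.sum_congr rfl fun x _ => ?_
  rw [pdens]
  ring

/-- The free energy: Legendre–Fenchel transform of the log-partition function. -/
noncomputable def Ffun {p : ℕ} (h : (Fin p → Bool) → ℝ) (τ : Fin p → ℝ) : ℝ :=
  ⨅ θ : Fin p → ℝ, (Afun h θ - ∑ i, τ i * θ i)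

/-- Shannon entropy of a pmf on `{0,1}^p`. -/
noncomputable def shEntropy {p : ℕ} (q : (Fin p → Bool) → ℝ) : ℝ :=
  -∑ x : Fin p → Bool, q x * Real.log (q x)

/-- Constrained entropy representation of the free energy:
`F(τ) = max { H(q) + E_q log h(X) : q pmf on {0,1}^p with E_q[X] = τ }` for `τ ∈ (0,1)^p`. -/
theorem free_energy_constrained_entropy {p : ℕ} (hp : 1 ≤ p)
    (h : (Fin p → Bool) → ℝ) (hpos : ∀ x, 0 < h x)
    (τ : Fin p → ℝ) (hτ : ∀ i, τ i ∈ Set.Ioo (0 : ℝ) 1) :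
    IsGreatest
      {r : ℝ | ∃ q : (Fin p → Bool) → ℝ, (∀ x, 0 ≤ q x) ∧
        (∑ x : Fin p → Bool, q x = 1) ∧
        (∀ i, ∑ x : Fin p → Bool, q x * bval (x i) = τ i) ∧
        r = shEntropy q + ∑ x : Fin p → Bool, q x * Real.log (h x)}
      (Ffun h τ) := by
  obtain ⟨θ0, hmin⟩ := exists_min hp hpos hτ
  have hbdd : BddBelow (Set.range fun θ : Fin p → ℝ => Afun h θ - ∑ i, τ i * θ i) := by
    refine ⟨Afun h θ0 - ∑ i, τ i * θ0 i, ?_⟩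
    rintro r ⟨θ, rfl⟩
    exact hmin θ
  have hF : Ffun h τ = Afun h θ0 - ∑ i, τ i * θ0 i :=
    le_antisymm (ciInf_le hbdd θ0) (le_ciInf hmin)
  constructor
  · -- membership: q = pdens h θ0
    set q : (Fin p → Bool) → ℝ := pdens h θ0 with hq
    have hq0 : ∀ x, 0 ≤ q x := fun x =>
      (div_pos (mul_pos (hpos x) (Real.exp_pos _)) (Zpos hpos θ0)).le
    have hq1 : ∑ x : Fin p → Bool, q x = 1 := pdens_sum hpos θ0
    have hqτ : ∀ i, ∑ x : Fin p → Bool, q x * bval (x i) = τ i := fun i => stationary hpos hmin i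
    refine ⟨q, hq0, hq1, hqτ, ?_⟩
    rw [hF]
    have hval : shEntropy q + ∑ x : Fin p → Bool, q x * Real.log (h x)
        = Afun h θ0 - ∑ i, τ i * θ0 i := by
      rw [shEntropy]
      have hlq : ∀ x : Fin p → Bool, q x * Real.log (q x)
          = q x * Real.log (h x) + q x * ip θ0 x - q x * Afun h θ0 := by
        intro x
        rw [hq, log_pdens hpos]
        ring
      simp_rw [hlq]
      rw [Finset.sum_sub_distrib, Finset.sum_add_distrib, ← Finset.sum_mul, hq1, one_mul,
        sum_mul_ip]
      simp_rw [hqτ]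
      rw [show (∑ i, θ0 i * τ i) = ∑ i, τ i * θ0 i from
        Finset.sum_congr rfl fun i _ => mul_comm _ _]
      ring
    linarith [hval]
  · -- upper bound
    rintro r ⟨q, hq0, hq1, hqτ, rfl⟩
    exact le_ciInf fun θ => upper_bound hpos θ τ q hq0 hq1 hqτ
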